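/- arXiv:2406.07320 — 3 statements merged into one kernel-verified Lean document; each statement's English description precedes it below -/
import Mathlib

section
/- (Key identity for Proposition 2.) Let Z_1,…,Z_N be independent square-integrable real random variables with means μ_i = E[Z_i] and variances v_i = Var(Z_i), and let {1,…,N} be partitioned into H strata D_1,…,D_H with |D_h| = N_h ≥ 2. Then E[Σ_{h=1}^H (N_h/N) S²_{Z_h}] = (1/N) Σ_{i=1}^N v_i + Σ_{h=1}^H (N_h/N) S²_{μ,h}, where S²_{Z_h} = (1/(N_h−1)) Σ_{i∈D_h} (Z_i − θ̂_{D_h})² with θ̂_{D_h} = (1/N_h) Σ_{i∈D_h} Z_i, and S²_{μ,h} = (1/(N_h−1)) Σ_{i∈D_h} (μ_i − μ̄_{D_h})² with μ̄_{D_h} = (1/N_h) Σ_{i∈D_h} μ_i. Consequently, the expected design variance of the Horvitz–Thompson estimator under stratified simple random sampling with proportional allocation equals ((1−f)/(nN)) Σ_{i=1}^N v_i + ((1−f)/n) Σ_{h=1}^H (N_h/N) S²_{μ,h}. -/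
open MeasureTheory ProbabilityTheory Finset
open scoped Classical

lemma sum_sq_dev' {ι : Type*} (D : Finset ι) (g : ι → ℝ) (hm : (D.card : ℝ) ≠ 0) :
    ∑ i ∈ D, (g i - (1 / (D.card : ℝ)) * ∑ j ∈ D, g j) ^ 2
      = ∑ i ∈ D, (g i) ^ 2 - (1 / (D.card : ℝ)) * (∑ i ∈ D, g i) ^ 2 := by
  have h1 : ∑ i ∈ D, (g i - (1 / (D.card : ℝ)) * ∑ j ∈ D, g j) ^ 2
      = ∑ i ∈ D, ((g i) ^ 2 - 2 * ((1 / (D.card : ℝ)) * ∑ j ∈ D, g j) * g i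
          + ((1 / (D.card : ℝ)) * ∑ j ∈ D, g j) ^ 2) := by
    apply Finset.sum_congr rfl; intro i _; ring
  rw [h1, Finset.sum_add_distrib, Finset.sum_sub_distrib, ← Finset.mul_sum,
    Finset.sum_const, nsmul_eq_mul]
  field_simp
  ring

lemma exp_sum_sq_dev {Ω : Type*} [MeasurableSpace Ω] (P : Measure Ω) [IsProbabilityMeasure P]
    {ι : Type*} (D : Finset ι) (Z : ι → Ω → ℝ)
    (hL2 : ∀ i ∈ D, MemLp (Z i) 2 P)
    (hvs : variance (fun ω => ∑ i ∈ D, Z i ω) P = ∑ i ∈ D, variance (Z i) P)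
    (hm : (D.card : ℝ) ≠ 0) :
    ∫ ω, ∑ i ∈ D, (Z i ω - (1 / (D.card : ℝ)) * ∑ j ∈ D, Z j ω) ^ 2 ∂P
      = (1 - 1 / (D.card : ℝ)) * ∑ i ∈ D, variance (Z i) P
        + ∑ i ∈ D, ((∫ ω, Z i ω ∂P) - (1 / (D.card : ℝ)) * ∑ j ∈ D, ∫ ω, Z j ω ∂P) ^ 2 := by
  have hsum : MemLp (fun ω => ∑ i ∈ D, Z i ω) 2 P := memLp_finset_sum D hL2
  have hpt : ∀ ω, ∑ i ∈ D, (Z i ω - (1 / (D.card : ℝ)) * ∑ j ∈ D, Z j ω) ^ 2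
      = ∑ i ∈ D, (Z i ω) ^ 2 - (1 / (D.card : ℝ)) * (∑ i ∈ D, Z i ω) ^ 2 :=
    fun ω => sum_sq_dev' D (fun i => Z i ω) hm
  simp only [hpt]
  rw [integral_sub (integrable_finset_sum D fun i hi => (hL2 i hi).integrable_sq)
      (hsum.integrable_sq.const_mul _),
    integral_finset_sum D (fun i hi => (hL2 i hi).integrable_sq), integral_const_mul]
  have hZ2 : ∀ i ∈ D, ∫ ω, (Z i ω) ^ 2 ∂P = variance (Z i) P + (∫ ω, Z i ω ∂P) ^ 2 := by
    intro i hi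
    have := variance_eq_sub (hL2 i hi)
    simp only [Pi.pow_apply] at this
    linarith
  have hS2 : ∫ ω, (∑ i ∈ D, Z i ω) ^ 2 ∂P
      = ∑ i ∈ D, variance (Z i) P + (∑ i ∈ D, ∫ ω, Z i ω ∂P) ^ 2 := by
    have := variance_eq_sub hsum
    simp only [Pi.pow_apply] at this
    rw [hvs] at this
    rw [integral_finset_sum D (fun i hi => (hL2 i hi).integrable one_le_two)] at this
    linarith
  rw [Finset.sum_congr rfl hZ2, hS2,
    sum_sq_dev' D (fun i => ∫ ω, Z i ω ∂P) hm, Finset.sum_add_distrib]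
  ring

/-- key identity for Proposition 2: For independent square-integrable
random variables `Z_1,…,Z_N` and a stratification into strata of size ≥ 2,
`E[∑_h (N_h/N) S²_{Z_h}] = (1/N) ∑ᵢ vᵢ + ∑_h (N_h/N) S²_{μ,h}`. Consequently, the
expected design variance of the Horvitz–Thompson estimator under stratified simple
random sampling with proportional allocation equals
`((1-f)/(nN)) ∑ᵢ vᵢ + ((1-f)/n) ∑_h (N_h/N) S²_{μ,h}`. -/
theorem expected_within_strata_variance
    {Ω : Type*} [MeasurableSpace Ω] (P : Measure Ω) [IsProbabilityMeasure P]
    (N H n : ℕ) (hn : 1 ≤ n) (hnN : n ≤ N)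
    (Z : Fin N → Ω → ℝ)
    (hmeas : ∀ i, Measurable (Z i))
    (hL2 : ∀ i, MemLp (Z i) 2 P)
    (hindep : iIndepFun Z P)
    (st : Fin N → Fin H)
    (hNh : ∀ h, 2 ≤ (univ.filter (fun i => st i = h)).card) :
    (let Dh : Fin H → Finset (Fin N) := fun h => univ.filter (fun i => st i = h)
     let Nh : Fin H → ℕ := fun h => (Dh h).card
     -- realized within-stratum sample variance
     let S2Z : Fin H → Ω → ℝ := fun h ω =>
       (1 / ((Nh h : ℝ) - 1)) *
         ∑ i ∈ Dh h, (Z i ω - (1 / (Nh h : ℝ)) * ∑ j ∈ Dh h, Z j ω) ^ 2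
     let μZ : Fin N → ℝ := fun i => ∫ ω, Z i ω ∂P
     let v : Fin N → ℝ := fun i => variance (Z i) P
     -- within-stratum variance of the means
     let S2μ : Fin H → ℝ := fun h =>
       (1 / ((Nh h : ℝ) - 1)) *
         ∑ i ∈ Dh h, (μZ i - (1 / (Nh h : ℝ)) * ∑ j ∈ Dh h, μZ j) ^ 2
     let f : ℝ := (n : ℝ) / N
     (∫ ω, (∑ h, ((Nh h : ℝ) / N) * S2Z h ω) ∂P
        = (1 / (N : ℝ)) * ∑ i, v i + ∑ h, ((Nh h : ℝ) / N) * S2μ h)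
     ∧ ((1 - f) / (n : ℝ)) * ∫ ω, (∑ h, ((Nh h : ℝ) / N) * S2Z h ω) ∂P
         = ((1 - f) / ((n : ℝ) * N)) * ∑ i, v i
           + ((1 - f) / (n : ℝ)) * ∑ h, ((Nh h : ℝ) / N) * S2μ h) := by
  intro Dh Nh S2Z μZ v S2μ f
  have hN0 : (N : ℝ) ≠ 0 := by
    have : 1 ≤ N := le_trans hn hnN
    positivity
  have hm : ∀ h, ((Nh h : ℕ) : ℝ) ≠ 0 := by
    intro h
    have := hNh h
    have : (2 : ℝ) ≤ (Nh h : ℝ) := by exact_mod_cast this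
    linarith
  have hm1 : ∀ h, ((Nh h : ℝ) - 1) ≠ 0 := by
    intro h
    have := hNh h
    have : (2 : ℝ) ≤ (Nh h : ℝ) := by exact_mod_cast this
    linarith
  -- membership in stratum
  have hdev : ∀ (h : Fin H) (i : Fin N),
      MemLp (fun ω => Z i ω - (1 / (Nh h : ℝ)) * ∑ j ∈ Dh h, Z j ω) 2 P := by
    intro h i
    exact (hL2 i).sub ((memLp_finset_sum (Dh h) (fun j _ => hL2 j)).const_mul _)
  have hintS2 : ∀ h : Fin H, Integrable (fun ω => ((Nh h : ℝ) / N) * S2Z h ω) P := by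
    intro h
    exact (((integrable_finset_sum (Dh h)
      (fun i _ => (hdev h i).integrable_sq)).const_mul _).const_mul _)
  -- variance of stratum sum
  have hvs : ∀ h : Fin H,
      variance (fun ω => ∑ i ∈ Dh h, Z i ω) P = ∑ i ∈ Dh h, variance (Z i) P := by
    intro h
    have heq : (fun ω => ∑ i ∈ Dh h, Z i ω) = ∑ i ∈ Dh h, Z i := by
      funext ω; simp [Finset.sum_apply]
    rw [heq]
    exact IndepFun.variance_sum (fun i _ => hL2 i)
      (fun i _ j _ hij => hindep.indepFun hij)
  have hone : ∀ h : Fin H,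
      ∫ ω, ((Nh h : ℝ) / N) * S2Z h ω ∂P
        = (1 / (N : ℝ)) * ∑ i ∈ Dh h, v i + ((Nh h : ℝ) / N) * S2μ h := by
    intro h
    rw [integral_const_mul]
    show ((Nh h : ℝ) / N) * ∫ ω, (1 / ((Nh h : ℝ) - 1)) *
        ∑ i ∈ Dh h, (Z i ω - (1 / (Nh h : ℝ)) * ∑ j ∈ Dh h, Z j ω) ^ 2 ∂P = _
    rw [integral_const_mul,
      exp_sum_sq_dev P (Dh h) Z (fun i _ => hL2 i) (hvs h) (hm h)]
    show _ = (1 / (N : ℝ)) * ∑ i ∈ Dh h, v i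
        + ((Nh h : ℝ) / N) * ((1 / ((Nh h : ℝ) - 1)) *
            ∑ i ∈ Dh h, (μZ i - (1 / (Nh h : ℝ)) * ∑ j ∈ Dh h, μZ j) ^ 2)
    have h1 := hm h
    have h2 := hm1 h
    simp only [Nh, μZ, v] at h1 h2 ⊢
    field_simp
  have key : ∫ ω, (∑ h, ((Nh h : ℝ) / N) * S2Z h ω) ∂P
      = (1 / (N : ℝ)) * ∑ i, v i + ∑ h, ((Nh h : ℝ) / N) * S2μ h := by
    rw [integral_finset_sum _ (fun h _ => hintS2 h), Finset.sum_congr rfl (fun h _ => hone h),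
      Finset.sum_add_distrib, ← Finset.mul_sum]
    congr 1
    congr 1
    exact Finset.sum_fiberwise_of_maps_to (fun i _ => Finset.mem_univ (st i)) v
  exact ⟨key, by rw [key]; ring⟩
end

section
/- (Corollary 1, equal-size strata.) Let N = H·m with integers H ≥ 1 and m ≥ 2, and let Z_1,…,Z_N be independent square-integrable real random variables with means μ_i = E[Z_i] and variances v_i = Var(Z_i). Among all partitions of {1,…,N} into H strata D_1,…,D_H each of size exactly m, a partition minimizes the expected within-strata weighted variance E[Σ_{h=1}^H (1/H) S²_{Z_h}] if and only if it minimizes the k-means objective Σ_{h=1}^H min_{c_h ∈ ℝ} Σ_{i∈D_h} (μ_i − c_h)² on the means μ_1,…,μ_N; indeed E[Σ_h (1/H) S²_{Z_h}] = (1/N) Σ_{i=1}^N v_i + (m/(N(m−1))) Σ_{h=1}^H Σ_{i∈D_h} (μ_i − μ̄_{D_h})², and for each stratum Σ_{i∈D_h} (μ_i − μ̄_{D_h})² = min_{c∈ℝ} Σ_{i∈D_h} (μ_i − c)². -/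
open MeasureTheory ProbabilityTheory Finset
open scoped Classical

lemma aux_sq_expand {ι : Type*} (D : Finset ι) (f : ι → ℝ) (c : ℝ) :
    ∑ i ∈ D, (f i - c) ^ 2
      = ∑ i ∈ D, f i ^ 2 - 2 * c * ∑ i ∈ D, f i + (D.card : ℝ) * c ^ 2 := by
  have h : ∀ i ∈ D, (f i - c) ^ 2 = f i ^ 2 - 2 * c * f i + c ^ 2 := fun i _ => by ring
  rw [Finset.sum_congr rfl h, Finset.sum_add_distrib, Finset.sum_sub_distrib,
    ← Finset.mul_sum, Finset.sum_const, nsmul_eq_mul]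

lemma aux_kmeans {ι : Type*} (D : Finset ι) (f : ι → ℝ) (m : ℕ) (hD : D.card = m)
    (hm : 0 < m) :
    ∑ i ∈ D, (f i - (1 / (m : ℝ)) * ∑ j ∈ D, f j) ^ 2
      = ⨅ c : ℝ, ∑ i ∈ D, (f i - c) ^ 2 := by
  have hm0 : (m : ℝ) ≠ 0 := Nat.cast_ne_zero.2 hm.ne'
  set μ := (1 / (m : ℝ)) * ∑ j ∈ D, f j with hμ
  have hs : ∑ j ∈ D, f j = (m : ℝ) * μ := by rw [hμ]; field_simp
  have key : ∀ c : ℝ, ∑ i ∈ D, (f i - c) ^ 2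
      = ∑ i ∈ D, (f i - μ) ^ 2 + (m : ℝ) * (μ - c) ^ 2 := by
    intro c
    rw [aux_sq_expand, aux_sq_expand, hD, hs]
    ring
  refine le_antisymm (le_ciInf fun c => ?_) ?_
  · rw [key c]
    nlinarith [sq_nonneg (μ - c), Nat.cast_nonneg (α := ℝ) m]
  · exact ciInf_le ⟨0, by
      rintro x ⟨c, rfl⟩
      exact Finset.sum_nonneg fun i _ => sq_nonneg _⟩ μ

lemma aux_integral {Ω : Type*} [MeasurableSpace Ω] (P : Measure Ω) [IsProbabilityMeasure P]
    {N : ℕ} (Z : Fin N → Ω → ℝ) (hmeas : ∀ i, Measurable (Z i))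
    (hL2 : ∀ i, MemLp (Z i) 2 P)
    (hindep : iIndepFun Z P)
    (D : Finset (Fin N)) (m : ℕ) (hD : D.card = m) (hm : 0 < m) :
    ∫ ω, ∑ i ∈ D, (Z i ω - (1 / (m : ℝ)) * ∑ j ∈ D, Z j ω) ^ 2 ∂P
      = (1 - 1 / (m : ℝ)) * ∑ i ∈ D, variance (Z i) P
        + ∑ i ∈ D, ((∫ ω, Z i ω ∂P) - (1 / (m : ℝ)) * ∑ j ∈ D, ∫ ω, Z j ω ∂P) ^ 2 := by
  have hm0 : (m : ℝ) ≠ 0 := Nat.cast_ne_zero.2 hm.ne'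
  set μ : Fin N → ℝ := fun i => ∫ ω, Z i ω ∂P with hμdef
  set v : Fin N → ℝ := fun i => variance (Z i) P with hvdef
  have hsq : ∀ i, Integrable (fun ω => Z i ω ^ 2) P := fun i => (hL2 i).integrable_sq
  have hmul : ∀ i j, Integrable (fun ω => Z i ω * Z j ω) P := by
    intro i j
    have h1 := ((hL2 i).add (hL2 j)).integrable_sq
    have h2 := hsq i
    have h3 := hsq j
    have heq : (fun ω => Z i ω * Z j ω)
        = fun ω => (((Z i ω + Z j ω) ^ 2 - Z i ω ^ 2) - Z j ω ^ 2) / 2 := by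
      funext ω; ring
    rw [heq]
    exact ((h1.sub h2).sub h3).div_const 2
  -- pointwise rewrite
  have hpt : ∀ ω, ∑ i ∈ D, (Z i ω - (1 / (m : ℝ)) * ∑ j ∈ D, Z j ω) ^ 2
      = ∑ i ∈ D, Z i ω ^ 2 - (1 / (m : ℝ)) * ∑ i ∈ D, ∑ j ∈ D, Z i ω * Z j ω := by
    intro ω
    rw [aux_sq_expand, hD, ← Finset.sum_mul_sum]
    field_simp
    ring
  rw [integral_congr_ae (Filter.Eventually.of_forall hpt)]
  have hI1 : Integrable (fun ω => ∑ i ∈ D, Z i ω ^ 2) P :=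
    integrable_finset_sum _ fun i _ => hsq i
  have hI2 : Integrable (fun ω => ∑ i ∈ D, ∑ j ∈ D, Z i ω * Z j ω) P :=
    integrable_finset_sum _ fun i _ => integrable_finset_sum _ fun j _ => hmul i j
  rw [integral_sub hI1 (hI2.const_mul _), integral_const_mul,
    integral_finset_sum _ fun i _ => hsq i,
    integral_finset_sum _ fun i _ => integrable_finset_sum _ fun j _ => hmul i j]
  rw [Finset.sum_congr rfl fun i (_ : i ∈ D) => integral_finset_sum D fun j _ => hmul i j]
  have hsqint : ∀ i, ∫ ω, Z i ω ^ 2 ∂P = v i + μ i ^ 2 := by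
    intro i
    have := variance_eq_sub (hL2 i)
    simp only [hvdef, hμdef]
    rw [this]
    simp only [Pi.pow_apply]
    ring
  have hprod : ∀ i ∈ D, ∀ j ∈ D, ∫ ω, Z i ω * Z j ω ∂P
      = μ i * μ j + (if i = j then v i else 0) := by
    intro i _ j _
    by_cases h : i = j
    · subst h
      have : ∀ ω, Z i ω * Z i ω = Z i ω ^ 2 := fun ω => (sq (Z i ω)).symm
      rw [integral_congr_ae (Filter.Eventually.of_forall this), hsqint i, if_pos rfl]
      ring
    · rw [if_neg h, add_zero]
      exact (IndepFun.integral_mul_eq_mul_integral (hindep.indepFun h)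
        (hL2 i).aestronglyMeasurable (hL2 j).aestronglyMeasurable)
  rw [Finset.sum_congr rfl fun i hi => Finset.sum_congr rfl fun j hj => hprod i hi j hj]
  have hsplit : ∑ i ∈ D, ∑ j ∈ D, (μ i * μ j + if i = j then v i else 0)
      = (∑ i ∈ D, μ i) * (∑ i ∈ D, μ i) + ∑ i ∈ D, v i := by
    rw [Finset.sum_mul_sum]
    rw [← Finset.sum_add_distrib]
    refine Finset.sum_congr rfl fun i hi => ?_
    rw [Finset.sum_add_distrib, Finset.sum_ite_eq D i (fun _ => v i), if_pos hi]
  rw [hsplit, Finset.sum_congr rfl (fun i (_ : i ∈ D) => hsqint i),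
    Finset.sum_add_distrib, aux_sq_expand, hD]
  field_simp
  ring

/-- Corollary 1, equal-size strata: For `N = H·m` (`m ≥ 2`) and
independent square-integrable `Z_i`, among all partitions into `H` strata of size
exactly `m`, minimizing `E[∑_h (1/H) S²_{Z_h}]` is equivalent to minimizing the
k-means objective `∑_h ⨅_c ∑_{i∈D_h} (μ_i - c)²` on the means; indeed
`E[∑_h (1/H) S²_{Z_h}] = (1/N)∑ᵢ vᵢ + (m/(N(m-1))) ∑_h ∑_{i∈D_h} (μᵢ - μ̄_{D_h})²`
and within each stratum the sum of squared deviations from the stratum mean attains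
the infimum over centers. -/
theorem kmeans_equal_size_strata
    {Ω : Type*} [MeasurableSpace Ω] (P : Measure Ω) [IsProbabilityMeasure P]
    (N H m : ℕ) (hH : 1 ≤ H) (hm : 2 ≤ m) (hNm : N = H * m)
    (Z : Fin N → Ω → ℝ)
    (hmeas : ∀ i, Measurable (Z i))
    (hL2 : ∀ i, MemLp (Z i) 2 P)
    (hindep : iIndepFun Z P) :
    (let Dh : (Fin N → Fin H) → Fin H → Finset (Fin N) :=
       fun st h => univ.filter (fun i => st i = h)
     let Good : (Fin N → Fin H) → Prop := fun st => ∀ h, (Dh st h).card = m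
     let μZ : Fin N → ℝ := fun i => ∫ ω, Z i ω ∂P
     let v : Fin N → ℝ := fun i => variance (Z i) P
     let μbar : (Fin N → Fin H) → Fin H → ℝ :=
       fun st h => (1 / (m : ℝ)) * ∑ i ∈ Dh st h, μZ i
     -- expected within-strata weighted sample variance of the Z's
     let EW : (Fin N → Fin H) → ℝ := fun st =>
       ∫ ω, (∑ h, (1 / (H : ℝ)) *
         ((1 / ((m : ℝ) - 1)) *
           ∑ i ∈ Dh st h, (Z i ω - (1 / (m : ℝ)) * ∑ j ∈ Dh st h, Z j ω) ^ 2)) ∂P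
     -- the k-means objective on the means
     let K : (Fin N → Fin H) → ℝ := fun st =>
       ∑ h, ⨅ c : ℝ, ∑ i ∈ Dh st h, (μZ i - c) ^ 2
     (∀ st, Good st →
        ((∀ st', Good st' → EW st ≤ EW st') ↔ (∀ st', Good st' → K st ≤ K st')))
     ∧ (∀ st, Good st →
          EW st = (1 / (N : ℝ)) * ∑ i, v i
            + ((m : ℝ) / ((N : ℝ) * ((m : ℝ) - 1)))
                * ∑ h, ∑ i ∈ Dh st h, (μZ i - μbar st h) ^ 2)
     ∧ (∀ st, Good st → ∀ h,
          ∑ i ∈ Dh st h, (μZ i - μbar st h) ^ 2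
            = ⨅ c : ℝ, ∑ i ∈ Dh st h, (μZ i - c) ^ 2)) := by
  intro Dh Good μZ v μbar EW K
  have hmpos : 0 < m := by omega
  have hm0 : (m : ℝ) ≠ 0 := Nat.cast_ne_zero.2 hmpos.ne'
  have hm1 : (m : ℝ) - 1 ≠ 0 := by
    have : (2 : ℝ) ≤ (m : ℝ) := by exact_mod_cast hm
    linarith
  have hH0 : (H : ℝ) ≠ 0 := Nat.cast_ne_zero.2 (by omega)
  have hNcast : (N : ℝ) = (H : ℝ) * (m : ℝ) := by rw [hNm]; push_cast; ring
  have hNpos : (0 : ℝ) < (N : ℝ) := by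
    rw [hNcast]
    have h1 : (1 : ℝ) ≤ (H : ℝ) := by exact_mod_cast hH
    have h2 : (2 : ℝ) ≤ (m : ℝ) := by exact_mod_cast hm
    nlinarith
  -- part 3
  have part3 : ∀ st, Good st → ∀ h,
      ∑ i ∈ Dh st h, (μZ i - μbar st h) ^ 2
        = ⨅ c : ℝ, ∑ i ∈ Dh st h, (μZ i - c) ^ 2 := by
    intro st hst h
    exact aux_kmeans (Dh st h) μZ m (hst h) hmpos
  -- part 2
  have part2 : ∀ st, Good st →
      EW st = (1 / (N : ℝ)) * ∑ i, v i
        + ((m : ℝ) / ((N : ℝ) * ((m : ℝ) - 1)))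
            * ∑ h, ∑ i ∈ Dh st h, (μZ i - μbar st h) ^ 2 := by
    intro st hst
    have hT : ∀ h : Fin H, Integrable
        (fun ω => ∑ i ∈ Dh st h, (Z i ω - (1 / (m : ℝ)) * ∑ j ∈ Dh st h, Z j ω) ^ 2) P := by
      intro h
      refine integrable_finset_sum _ fun i _ => ?_
      have hmem : MemLp (fun ω => Z i ω - (1 / (m : ℝ)) * ∑ j ∈ Dh st h, Z j ω) 2 P := by
        have hsum : MemLp (fun ω => ∑ j ∈ Dh st h, Z j ω) 2 P :=
          memLp_finset_sum _ fun j _ => hL2 j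
        exact (hL2 i).sub (hsum.const_mul _)
      exact hmem.integrable_sq
    have hEW : EW st = ∑ h, (1 / (H : ℝ)) * ((1 / ((m : ℝ) - 1)) *
        ∫ ω, ∑ i ∈ Dh st h, (Z i ω - (1 / (m : ℝ)) * ∑ j ∈ Dh st h, Z j ω) ^ 2 ∂P) := by
      show (∫ ω, (∑ h, (1 / (H : ℝ)) * ((1 / ((m : ℝ) - 1)) *
          ∑ i ∈ Dh st h, (Z i ω - (1 / (m : ℝ)) * ∑ j ∈ Dh st h, Z j ω) ^ 2)) ∂P) = _
      rw [integral_finset_sum _ fun h _ => ((hT h).const_mul _).const_mul _]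
      exact Finset.sum_congr rfl fun h _ => by
        rw [integral_const_mul, integral_const_mul]
    rw [hEW]
    have hint : ∀ h : Fin H,
        ∫ ω, ∑ i ∈ Dh st h, (Z i ω - (1 / (m : ℝ)) * ∑ j ∈ Dh st h, Z j ω) ^ 2 ∂P
          = (1 - 1 / (m : ℝ)) * ∑ i ∈ Dh st h, v i
            + ∑ i ∈ Dh st h, (μZ i - μbar st h) ^ 2 := fun h =>
      aux_integral P Z hmeas hL2 hindep (Dh st h) m (hst h) hmpos
    rw [Finset.sum_congr rfl fun h (_ : h ∈ univ) => by rw [hint h]]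
    have hperh : ∀ h : Fin H,
        (1 / (H : ℝ)) * ((1 / ((m : ℝ) - 1)) *
          ((1 - 1 / (m : ℝ)) * ∑ i ∈ Dh st h, v i + ∑ i ∈ Dh st h, (μZ i - μbar st h) ^ 2))
        = (1 / (N : ℝ)) * (∑ i ∈ Dh st h, v i)
          + ((m : ℝ) / ((N : ℝ) * ((m : ℝ) - 1))) * ∑ i ∈ Dh st h, (μZ i - μbar st h) ^ 2 := by
      intro h
      rw [hNcast]
      field_simp
    rw [Finset.sum_congr rfl fun h (_ : h ∈ univ) => hperh h, Finset.sum_add_distrib,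
      ← Finset.mul_sum, ← Finset.mul_sum]
    congr 2
    exact Finset.sum_fiberwise_of_maps_to (fun i _ => Finset.mem_univ (st i)) v
  -- part 1
  have part1 : ∀ st, Good st →
      ((∀ st', Good st' → EW st ≤ EW st') ↔ (∀ st', Good st' → K st ≤ K st')) := by
    intro st hst
    have hK : ∀ st', Good st' →
        K st' = ∑ h, ∑ i ∈ Dh st' h, (μZ i - μbar st' h) ^ 2 := by
      intro st' hst'
      exact (Finset.sum_congr rfl fun h _ => (part3 st' hst' h)).symm
    have hc : (0 : ℝ) < (m : ℝ) / ((N : ℝ) * ((m : ℝ) - 1)) := by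
      have hmr : (2 : ℝ) ≤ (m : ℝ) := by exact_mod_cast hm
      apply div_pos (by linarith)
      apply mul_pos hNpos
      linarith
    constructor
    · intro hmin st' hst'
      have h1 := hmin st' hst'
      rw [part2 st hst, part2 st' hst'] at h1
      rw [hK st hst, hK st' hst']
      nlinarith
    · intro hmin st' hst'
      have h1 := hmin st' hst'
      rw [hK st hst, hK st' hst'] at h1
      rw [part2 st hst, part2 st' hst']
      nlinarith
  exact ⟨part1, part2, part3⟩
end

section
/- (Proposition 3.) Let (X_1,Z_1),…,(X_N,Z_N) (2 ≤ n < N) be i.i.d. random pairs with values in a measurable space 𝒳 times ℝ, with Z_1 square-integrable, and let g be a fixed measurable version of x ↦ E[Z_1 | X_1 = x]; use the proxies Ẑ_i = g(X_i). For a uniformly drawn n-element subset S of {1,…,N} (independent of the data), let Var_SRS(θ̂_HT) = ((1−f)/n)·(1/(N−1)) Σ_i (Z_i − θ̂_D)² and Var_SRS(θ̂_DF) = ((1−f)/n)·(1/(N−1)) Σ_i ((Z_i − Ẑ_i) − (θ̂_D − Z̄̂))² denote the design variances of the Horvitz–Thompson and difference estimators given the data, with f = n/N, θ̂_D = (1/N)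 Σ_i Z_i, Z̄̂ = (1/N) Σ_i Ẑ_i. Then E[Var_SRS(θ̂_DF)] · Var(Z_1) = E[Var_SRS(θ̂_HT)] · E[(Z_1 − g(X_1))²]; equivalently, if Var(Z_1) > 0, the ratio of the expected MSE of the difference estimator to that of the Horvitz–Thompson estimator under simple random sampling equals E[Var(Z_1 | X_1)] / Var(Z_1). -/
open MeasureTheory ProbabilityTheory Finset

private lemma memℒp_two_condexp {α : Type*} {m m0 : MeasurableSpace α} (hm : m ≤ m0)
    (μ : Measure α) [IsFiniteMeasure μ] {f : α → ℝ} (hf : MemLp f 2 μ) :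
    MemLp (μ[f|m]) 2 μ := by
  have hcoe : (((condExpL2 ℝ ℝ hm (hf.toLp f) : lpMeas ℝ ℝ m 2 μ) : Lp ℝ 2 μ) : α → ℝ)
      =ᵐ[μ] μ[f|m] := by
    refine ae_eq_condExp_of_forall_setIntegral_eq hm (hf.integrable one_le_two) ?_ ?_ ?_
    · intro s hs hμs
      exact integrableOn_Lp_of_measure_ne_top _ fact_one_le_two_ennreal.elim hμs.ne
    · intro s hs hμs
      rw [integral_condExpL2_eq hm (hf.toLp f) hs hμs.ne]
      exact setIntegral_congr_ae (hm s hs) ((hf.coeFn_toLp).mono fun x hx _ => hx)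
    · exact lpMeas.aestronglyMeasurable _
  exact (Lp.memLp _).ae_eq hcoe

private lemma integrable_mul_of_memℒp_two {α : Type*} [MeasurableSpace α] {μ : Measure α}
    {f g : α → ℝ} (hf : MemLp f 2 μ) (hg : MemLp g 2 μ) :
    Integrable (fun ω => f ω * g ω) μ := by
  have h : MemLp (g • f) 1 μ := hf.smul hg
  exact (memLp_one_iff_integrable.mp h).congr (Filter.Eventually.of_forall fun ω => by
    simp [Pi.smul_apply, mul_comm])

private lemma expected_sum_sq_dev {Ω : Type*} [MeasurableSpace Ω] (P : Measure Ω)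
    [IsProbabilityMeasure P] {N : ℕ} (hN : 0 < N) (W : Fin N → Ω → ℝ)
    (hL2 : ∀ i, MemLp (W i) 2 P)
    (hind : ∀ i j, i ≠ j → IndepFun (W i) (W j) P)
    {M1 M2 : ℝ} (hm1 : ∀ i, ∫ ω, W i ω ∂P = M1)
    (hm2 : ∀ i, ∫ ω, (W i ω) ^ 2 ∂P = M2) :
    ∫ ω, ∑ i, (W i ω - (1 / (N : ℝ)) * ∑ j, W j ω) ^ 2 ∂P
      = ((N : ℝ) - 1) * (M2 - M1 ^ 2) := by
  have hN0 : (N : ℝ) ≠ 0 := Nat.cast_ne_zero.mpr hN.ne'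
  -- pointwise expansion
  have key : ∀ ω, ∑ i, (W i ω - (1 / (N : ℝ)) * ∑ j, W j ω) ^ 2
      = (∑ i, (W i ω) ^ 2) - (1 / (N : ℝ)) * (∑ j, W j ω) ^ 2 := by
    intro ω
    have h1 : ∀ i ∈ Finset.univ (α := Fin N),
        (W i ω - (1 / (N : ℝ)) * ∑ j, W j ω) ^ 2
          = (W i ω) ^ 2 - (2 * ((1 / (N : ℝ)) * ∑ j, W j ω)) * W i ω
            + ((1 / (N : ℝ)) * ∑ j, W j ω) ^ 2 := fun i _ => by ring
    rw [Finset.sum_congr rfl h1]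
    rw [Finset.sum_add_distrib, Finset.sum_sub_distrib, ← Finset.mul_sum,
      Finset.sum_const, Finset.card_univ, Fintype.card_fin, nsmul_eq_mul]
    field_simp
    ring
  simp_rw [key]
  -- integrability facts
  have hsq : ∀ i : Fin N, Integrable (fun ω => (W i ω) ^ 2) P := fun i => (hL2 i).integrable_sq
  have hsumsq : Integrable (fun ω => ∑ i, (W i ω) ^ 2) P :=
    integrable_finset_sum _ fun i _ => hsq i
  have hmul : ∀ i j : Fin N, Integrable (fun ω => W i ω * W j ω) P := fun i j =>
    integrable_mul_of_memℒp_two (hL2 i) (hL2 j)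
  have hSsq : Integrable (fun ω => (∑ j, W j ω) ^ 2) P := by
    have : (fun ω => (∑ j, W j ω) ^ 2) = fun ω => ∑ i, ∑ j, W i ω * W j ω := by
      funext ω; rw [sq, Finset.sum_mul_sum]
    rw [this]
    exact integrable_finset_sum _ fun i _ => integrable_finset_sum _ fun j _ => hmul i j
  rw [integral_sub hsumsq (hSsq.const_mul _), integral_finset_sum _ fun i _ => hsq i,
    integral_const_mul]
  -- second moment of the sum
  have hS2 : ∫ ω, (∑ j, W j ω) ^ 2 ∂P
      = (N : ℝ) * M2 + (N : ℝ) * ((N : ℝ) - 1) * M1 ^ 2 := by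
    have h1 : ∀ ω, (∑ j, W j ω) ^ 2 = ∑ i, ∑ j, W i ω * W j ω := fun ω => by
      rw [sq, Finset.sum_mul_sum]
    simp_rw [h1]
    rw [integral_finset_sum _ fun i _ => integrable_finset_sum _ fun j _ => hmul i j]
    have hrow : ∀ i : Fin N, ∫ ω, ∑ j, W i ω * W j ω ∂P
        = M2 + ((N : ℝ) - 1) * M1 ^ 2 := by
      intro i
      rw [integral_finset_sum _ fun j _ => hmul i j]
      rw [← Finset.sum_erase_add _ _ (Finset.mem_univ i)]
      have hdiag : ∫ ω, W i ω * W i ω ∂P = M2 := by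
        rw [← hm2 i]; congr 1; funext ω; ring
      have hoff : ∀ j ∈ Finset.univ.erase i,
          ∫ ω, W i ω * W j ω ∂P = M1 ^ 2 := by
        intro j hj
        have hij : i ≠ j := (Finset.ne_of_mem_erase hj).symm
        have := (hind i j hij).integral_fun_mul_eq_mul_integral (hL2 i).aestronglyMeasurable
          (hL2 j).aestronglyMeasurable
        have heq : ∫ ω, W i ω * W j ω ∂P = (∫ ω, W i ω ∂P) * ∫ ω, W j ω ∂P := this
        rw [heq, hm1 i, hm1 j, sq]
      rw [Finset.sum_congr rfl hoff, Finset.sum_const, Finset.card_erase_of_mem (Finset.mem_univ i),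
        Finset.card_univ, Fintype.card_fin, hdiag, nsmul_eq_mul]
      rw [Nat.cast_sub hN]
      push_cast
      ring
    rw [Finset.sum_congr rfl fun i _ => hrow i, Finset.sum_const, Finset.card_univ,
      Fintype.card_fin, nsmul_eq_mul]
    ring
  rw [hS2, Finset.sum_congr rfl fun i _ => hm2 i, Finset.sum_const, Finset.card_univ,
    Fintype.card_fin, nsmul_eq_mul]
  field_simp
  ring

/-- Proposition 3: For i.i.d. pairs `(Xᵢ, Zᵢ)` and proxies
`Ẑᵢ = g(Xᵢ)` with `g` a version of `x ↦ E[Z₁ | X₁ = x]`, the expected design variances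
under simple random sampling of the difference and Horvitz–Thompson estimators satisfy
`E[Var_SRS(θ̂_DF)] · Var(Z₁) = E[Var_SRS(θ̂_HT)] · E[(Z₁ - g(X₁))²]`, i.e. their ratio
equals `E[Var(Z₁|X₁)]/Var(Z₁)`. -/
theorem df_vs_ht_expected_mse_ratio
    {Ω 𝒳 : Type*} [MeasurableSpace Ω] [MeasurableSpace 𝒳]
    (P : Measure Ω) [IsProbabilityMeasure P]
    (N n : ℕ) [NeZero N] (hn : 2 ≤ n) (hnN : n < N)
    (X : Fin N → Ω → 𝒳) (Z : Fin N → Ω → ℝ)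
    (hX : ∀ i, Measurable (X i)) (hZ : ∀ i, Measurable (Z i))
    (hL2 : MemLp (Z 0) 2 P)
    (hindep : iIndepFun (fun i ω => (X i ω, Z i ω)) P)
    (hident : ∀ i, IdentDistrib (fun ω => (X i ω, Z i ω)) (fun ω => (X 0 ω, Z 0 ω)) P P)
    (g : 𝒳 → ℝ) (hg : Measurable g)
    (hcond : (fun ω => g (X 0 ω))
        =ᵐ[P] P[Z 0 | MeasurableSpace.comap (X 0) inferInstance]) :
    (let f : ℝ := (n : ℝ) / N
     let θD : Ω → ℝ := fun ω => (1 / (N : ℝ)) * ∑ i, Z i ω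
     let Zhatbar : Ω → ℝ := fun ω => (1 / (N : ℝ)) * ∑ i, g (X i ω)
     -- design variance of the Horvitz–Thompson estimator given the data
     let VHT : Ω → ℝ := fun ω =>
       ((1 - f) / n) * ((1 / ((N : ℝ) - 1)) * ∑ i, (Z i ω - θD ω) ^ 2)
     -- design variance of the difference estimator given the data
     let VDF : Ω → ℝ := fun ω =>
       ((1 - f) / n) * ((1 / ((N : ℝ) - 1)) *
         ∑ i, ((Z i ω - g (X i ω)) - (θD ω - Zhatbar ω)) ^ 2)
     (∫ ω, VDF ω ∂P) * variance (Z 0) P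
       = (∫ ω, VHT ω ∂P) * ∫ ω, (Z 0 ω - g (X 0 ω)) ^ 2 ∂P) := by
  intro f θD Zhatbar VHT VDF
  have hNpos : 0 < N := lt_trans (lt_of_lt_of_le Nat.zero_lt_two hn) hnN
  have hm : MeasurableSpace.comap (X 0) inferInstance ≤ (inferInstance : MeasurableSpace Ω) :=
    (hX 0).comap_le
  -- MemLp facts
  have hgL2 : MemLp (fun ω => g (X 0 ω)) 2 P :=
    (memℒp_two_condexp hm P hL2).ae_eq hcond.symm
  set D : Fin N → Ω → ℝ := fun i ω => Z i ω - g (X i ω) with hD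
  have hφ : Measurable (fun p : 𝒳 × ℝ => p.2 - g p.1) :=
    measurable_snd.sub (hg.comp measurable_fst)
  have hZid : ∀ i, IdentDistrib (Z i) (Z 0) P P := fun i => (hident i).comp measurable_snd
  have hDid : ∀ i, IdentDistrib (D i) (D 0) P P := fun i => (hident i).comp hφ
  have hD0L2 : MemLp (D 0) 2 P := hL2.sub hgL2
  have hZL2 : ∀ i, MemLp (Z i) 2 P := fun i => (hZid i).symm.memLp_snd hL2
  have hDL2 : ∀ i, MemLp (D i) 2 P := fun i => (hDid i).symm.memLp_snd hD0L2
  -- pairwise independence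
  have hindZ : ∀ i j, i ≠ j → IndepFun (Z i) (Z j) P := fun i j hij =>
    (hindep.indepFun hij).comp measurable_snd measurable_snd
  have hindD : ∀ i j, i ≠ j → IndepFun (D i) (D j) P := fun i j hij =>
    (hindep.indepFun hij).comp hφ hφ
  -- moments
  have hZm1 : ∀ i, ∫ ω, Z i ω ∂P = ∫ ω, Z 0 ω ∂P := fun i => (hZid i).integral_eq
  have hZm2 : ∀ i, ∫ ω, (Z i ω) ^ 2 ∂P = ∫ ω, (Z 0 ω) ^ 2 ∂P := fun i =>
    ((hZid i).comp (measurable_id.pow_const 2)).integral_eq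
  have hDm1 : ∀ i, ∫ ω, D i ω ∂P = ∫ ω, D 0 ω ∂P := fun i => (hDid i).integral_eq
  have hDm2 : ∀ i, ∫ ω, (D i ω) ^ 2 ∂P = ∫ ω, (D 0 ω) ^ 2 ∂P := fun i =>
    ((hDid i).comp (measurable_id.pow_const 2)).integral_eq
  -- mean of D 0 is zero
  have hED0 : ∫ ω, D 0 ω ∂P = 0 := by
    have h1 : ∫ ω, D 0 ω ∂P = (∫ ω, Z 0 ω ∂P) - ∫ ω, g (X 0 ω) ∂P :=
      integral_sub (hL2.integrable one_le_two) (hgL2.integrable one_le_two)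
    rw [h1, integral_congr_ae hcond, integral_condExp hm, sub_self]
  -- the two key expectations
  have hHT := expected_sum_sq_dev P hNpos Z hZL2 hindZ hZm1 hZm2
  have hDF := expected_sum_sq_dev P hNpos D hDL2 hindD hDm1 hDm2
  -- rewrite VDF's summand in terms of D
  have hVDFsum : ∀ ω, ∑ i, ((Z i ω - g (X i ω)) - (θD ω - Zhatbar ω)) ^ 2
      = ∑ i, (D i ω - (1 / (N : ℝ)) * ∑ j, D j ω) ^ 2 := by
    intro ω
    refine Finset.sum_congr rfl fun i _ => ?_
    have : θD ω - Zhatbar ω = (1 / (N : ℝ)) * ∑ j, D j ω := by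
      simp only [θD, Zhatbar, hD, ← mul_sub, ← Finset.sum_sub_distrib]
    rw [this]
  have hVDF : ∫ ω, VDF ω ∂P
      = ((1 - f) / n) * ((1 / ((N : ℝ) - 1)) *
          (((N : ℝ) - 1) * ((∫ ω, (D 0 ω) ^ 2 ∂P) - (∫ ω, D 0 ω ∂P) ^ 2))) := by
    simp only [VDF]
    simp_rw [hVDFsum, integral_const_mul, hDF]
  have hVHT : ∫ ω, VHT ω ∂P
      = ((1 - f) / n) * ((1 / ((N : ℝ) - 1)) *
          (((N : ℝ) - 1) * ((∫ ω, (Z 0 ω) ^ 2 ∂P) - (∫ ω, Z 0 ω ∂P) ^ 2))) := by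
    simp only [VHT, θD]
    simp_rw [integral_const_mul, hHT]
  have hvar : variance (Z 0) P = (∫ ω, (Z 0 ω) ^ 2 ∂P) - (∫ ω, Z 0 ω ∂P) ^ 2 := by
    rw [variance_eq_sub hL2]; rfl
  have hgoalD : ∫ ω, (Z 0 ω - g (X 0 ω)) ^ 2 ∂P = ∫ ω, (D 0 ω) ^ 2 ∂P := rfl
  rw [hVDF, hVHT, hvar, hED0, hgoalD]
  ring
end
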